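/- arXiv:2301.09202 — 2 statements merged into one kernel-verified Lean document; each statement's English description precedes it below -/
import Mathlib

section
/- Let N be a finite set, and for each j ∈ N let M_j : [0,∞) → ℝ satisfy M_j(t) ≥ M_j⁰ > 0, let ρ_j > 0, and let ω_j* ∈ ℝ. Suppose V : [0,∞) → ℝ is differentiable, nonnegative, and satisfies V̇(t) ≤ Σ_{j∈N} (Ṁ_j(t)/2 − ρ_j)(ω_j(t) − ω_j*)² where Ṁ_j(t) ≤ 2ρ_j − ε for some ε > 0 and all j, t. Then ∫_0^∞ Σ_{j∈N} (ω_j(t) − ω_j*)² dt ≤ (2/ε) V(0); in particular, if each ω_j is uniformly continuous, then ω_j(t) → ω_j* as t → ∞ for all j ∈ N. -/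
open MeasureTheory Filter

/-- Lyapunov derivative bound plus a strict rate margin `ε` yield an
integrable quadratic frequency deviation, and (with uniform continuity) convergence
of each frequency to its equilibrium value. -/
theorem stmt_9 {N : Type*} [Fintype N]
    (M : N → ℝ → ℝ) (M0 : N → ℝ) (hM0 : ∀ j, 0 < M0 j)
    (hMlb : ∀ j, ∀ t : ℝ, t ≥ 0 → M j t ≥ M0 j)
    (hMdiff : ∀ j, Differentiable ℝ (M j))
    (ρ : N → ℝ) (hρ : ∀ j, 0 < ρ j)
    (ωstar : N → ℝ) (ω : N → ℝ → ℝ)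
    (V : ℝ → ℝ) (hVdiff : Differentiable ℝ V) (hVnonneg : ∀ t : ℝ, t ≥ 0 → 0 ≤ V t)
    (ε : ℝ) (hε : 0 < ε)
    (hMrate : ∀ j, ∀ t : ℝ, t ≥ 0 → deriv (M j) t ≤ 2 * ρ j - ε)
    (hVdot : ∀ t : ℝ, t ≥ 0 →
      deriv V t ≤ ∑ j, (deriv (M j) t / 2 - ρ j) * (ω j t - ωstar j) ^ 2) :
    (∫⁻ t in Set.Ioi (0 : ℝ),
        ENNReal.ofReal (∑ j, (ω j t - ωstar j) ^ 2)
      ≤ ENNReal.ofReal ((2 / ε) * V 0)) ∧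
    ((∀ j, UniformContinuous (ω j)) →
      ∀ j, Tendsto (ω j) atTop (nhds (ωstar j))) := by
  set S : ℝ → ℝ := fun t => ∑ j, (ω j t - ωstar j) ^ 2 with hSdef
  have hSnonneg : ∀ t, 0 ≤ S t := fun t => Finset.sum_nonneg fun j _ => sq_nonneg _
  have hdV : ∀ t : ℝ, 0 ≤ t → deriv V t ≤ -(ε / 2) * S t := by
    intro t ht
    refine (hVdot t ht).trans ?_
    have hterm : ∀ j ∈ Finset.univ,
        (deriv (M j) t / 2 - ρ j) * (ω j t - ωstar j) ^ 2
          ≤ -(ε / 2) * (ω j t - ωstar j) ^ 2 := by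
      intro j _
      apply mul_le_mul_of_nonneg_right _ (sq_nonneg _)
      have := hMrate j t ht; linarith
    calc ∑ j, (deriv (M j) t / 2 - ρ j) * (ω j t - ωstar j) ^ 2
        ≤ ∑ j, -(ε / 2) * (ω j t - ωstar j) ^ 2 := Finset.sum_le_sum hterm
      _ = -(ε / 2) * S t := by rw [hSdef, Finset.mul_sum]
  have hdVneg : ∀ t : ℝ, 0 ≤ t → 0 ≤ -deriv V t := by
    intro t ht
    have h1 := hdV t ht
    have h2 : 0 ≤ (ε / 2) * S t := mul_nonneg (by linarith) (hSnonneg t)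
    linarith
  have hkey : ∀ t : ℝ, 0 ≤ t → S t ≤ 2 / ε * -deriv V t := by
    intro t ht
    have h1 := hdV t ht
    have h3 : ε / 2 * S t ≤ -deriv V t := by linarith
    calc S t = 2 / ε * (ε / 2 * S t) := by field_simp
      _ ≤ 2 / ε * -deriv V t := by
          apply mul_le_mul_of_nonneg_left h3 (by positivity)
  have hIoc : ∀ n : ℕ, ∫⁻ t in Set.Ioc (0 : ℝ) n, ENNReal.ofReal (S t)
      ≤ ENNReal.ofReal (2 / ε * V 0) := by
    intro n
    have hderivnn : ∀ x ∈ Set.Ioo (0 : ℝ) (n : ℝ), 0 ≤ -deriv V x := fun x hx =>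
      hdVneg x hx.1.le
    have hint : IntegrableOn (fun t => -deriv V t) (Set.Ioc (0 : ℝ) n) := by
      have hcont : ContinuousOn (fun t => -V t) (Set.Icc (0 : ℝ) n) :=
        (hVdiff.continuous.neg).continuousOn
      have hd : ∀ x ∈ Set.Ioo (0 : ℝ) (n : ℝ), HasDerivAt (fun t => -V t) (-deriv V x) x :=
        fun x _ => ((hVdiff x).hasDerivAt).neg
      exact intervalIntegral.integrableOn_deriv_of_nonneg hcont hd hderivnn
    have hftc : ∫ t in (0 : ℝ)..(n : ℝ), -deriv V t
        = (fun t => -V t) (n : ℝ) - (fun t => -V t) 0 :=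
      intervalIntegral.integral_eq_sub_of_hasDerivAt
        (fun x _ => ((hVdiff x).hasDerivAt).neg)
        ((intervalIntegrable_iff_integrableOn_Ioc_of_le (Nat.cast_nonneg n)).mpr hint)
    simp only [] at hftc
    have hintIoc : ∫ t in Set.Ioc (0 : ℝ) (n : ℝ), -deriv V t = V 0 - V n := by
      rw [← intervalIntegral.integral_of_le (Nat.cast_nonneg n), hftc]; ring
    calc ∫⁻ t in Set.Ioc (0 : ℝ) n, ENNReal.ofReal (S t)
        ≤ ∫⁻ t in Set.Ioc (0 : ℝ) n, ENNReal.ofReal (2 / ε * -deriv V t) := by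
          apply lintegral_mono_ae
          filter_upwards [ae_restrict_mem measurableSet_Ioc] with t ht
          exact ENNReal.ofReal_le_ofReal (hkey t ht.1.le)
      _ = ENNReal.ofReal (∫ t in Set.Ioc (0 : ℝ) n, 2 / ε * -deriv V t) := by
          rw [← MeasureTheory.ofReal_integral_eq_lintegral_ofReal]
          · exact hint.const_mul _
          · filter_upwards [ae_restrict_mem measurableSet_Ioc] with t ht
            exact mul_nonneg (by positivity) (hdVneg t ht.1.le)
      _ ≤ ENNReal.ofReal (2 / ε * V 0) := by
          apply ENNReal.ofReal_le_ofReal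
          rw [MeasureTheory.integral_const_mul, hintIoc]
          have hVn : 0 ≤ V n := hVnonneg n (Nat.cast_nonneg n)
          have h2ε : (0 : ℝ) ≤ 2 / ε := by positivity
          nlinarith
  have hpart1 : ∫⁻ t in Set.Ioi (0 : ℝ), ENNReal.ofReal (S t)
      ≤ ENNReal.ofReal (2 / ε * V 0) := by
    have hU : Set.Ioi (0 : ℝ) = ⋃ n : ℕ, Set.Ioc (0 : ℝ) n := by
      ext x
      simp only [Set.mem_Ioi, Set.mem_iUnion, Set.mem_Ioc]
      constructor
      · intro hx
        obtain ⟨n, hn⟩ := exists_nat_ge x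
        exact ⟨n, hx, hn⟩
      · rintro ⟨n, hx, -⟩; exact hx
    rw [hU, MeasureTheory.setLIntegral_iUnion_of_directed]
    · exact iSup_le hIoc
    · intro m n
      exact ⟨max m n,
        Set.Ioc_subset_Ioc_right (by exact_mod_cast le_max_left m n),
        Set.Ioc_subset_Ioc_right (by exact_mod_cast le_max_right m n)⟩
  refine ⟨hpart1, ?_⟩
  intro huc j
  set f : ℝ → ℝ := fun t => ω j t - ωstar j with hfdef
  have hucf : UniformContinuous f := (huc j).sub uniformContinuous_const
  rw [← tendsto_sub_nhds_zero_iff]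
  by_contra hcon
  rw [Metric.tendsto_atTop] at hcon
  push_neg at hcon
  obtain ⟨δ, hδ, hfreq⟩ := hcon
  obtain ⟨η0, hη0, hucδ⟩ := Metric.uniformContinuous_iff.mp hucf (δ / 2) (half_pos hδ)
  set η := η0 / 2 with hηdef
  have hηpos : 0 < η := half_pos hη0
  have hex : ∀ a : ℝ, ∃ t, a ≤ t ∧ δ ≤ |f t| := by
    intro a
    obtain ⟨t, hta, htd⟩ := hfreq a
    exact ⟨t, hta, by simpa [Real.dist_eq] using htd⟩
  let T : ℕ → ℝ := fun n =>
    Nat.rec (Classical.choose (hex 1)) (fun _ p => Classical.choose (hex (p + η + 1))) n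
  have hT0 : (1 : ℝ) ≤ T 0 := (Classical.choose_spec (hex 1)).1
  have hTsucc : ∀ n, T n + η + 1 ≤ T (n + 1) := fun n =>
    (Classical.choose_spec (hex (T n + η + 1))).1
  have hTδ : ∀ n, δ ≤ |f (T n)| := by
    intro n
    cases n with
    | zero => exact (Classical.choose_spec (hex 1)).2
    | succ k => exact (Classical.choose_spec (hex (T k + η + 1))).2
  have hmono : StrictMono T := strictMono_nat_of_lt_succ fun n => by
    have := hTsucc n; linarith
  have hTpos : ∀ n, 0 < T n := fun n =>
    lt_of_lt_of_le one_pos (hT0.trans (hmono.monotone (Nat.zero_le n)))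
  have hgap : ∀ m n : ℕ, m < n → T m + η ≤ T n := by
    intro m n h
    have h1 := hTsucc m
    have h2 : T (m + 1) ≤ T n := hmono.monotone h
    linarith
  set s : ℕ → Set ℝ := fun n => Set.Ioc (T n) (T n + η) with hsdef
  have hdisj : Pairwise (Function.onFun Disjoint s) := by
    intro m n hmn
    rcases lt_or_gt_of_ne hmn with h | h
    · refine Set.Ioc_disjoint_Ioc.mpr ?_
      calc min (T m + η) (T n + η) ≤ T m + η := min_le_left _ _
        _ ≤ T n := hgap m n h
        _ ≤ max (T m) (T n) := le_max_right _ _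
    · refine Set.Ioc_disjoint_Ioc.mpr ?_
      calc min (T m + η) (T n + η) ≤ T n + η := min_le_right _ _
        _ ≤ T m := hgap n m h
        _ ≤ max (T m) (T n) := le_max_left _ _
  have hsub : (⋃ n, s n) ⊆ Set.Ioi (0 : ℝ) := by
    rintro x hx
    simp only [Set.mem_iUnion] at hx
    obtain ⟨n, hn⟩ := hx
    exact lt_trans (hTpos n) hn.1
  have hlow : ∀ n, ENNReal.ofReal (δ ^ 2 / 4) * ENNReal.ofReal η
      ≤ ∫⁻ t in s n, ENNReal.ofReal (S t) := by
    intro n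
    have hpt : ∀ t ∈ s n, δ ^ 2 / 4 ≤ S t := by
      intro t ht
      have hd : dist t (T n) < η0 := by
        rw [Real.dist_eq, abs_of_nonneg (by linarith [ht.1.le] : (0 : ℝ) ≤ t - T n)]
        have := ht.2
        rw [hηdef] at this
        linarith
      have h2 := hucδ hd
      rw [Real.dist_eq] at h2
      have h3 : δ / 2 ≤ |f t| := by
        have habs := abs_sub_abs_le_abs_sub (f (T n)) (f t)
        rw [abs_sub_comm (f (T n)) (f t)] at habs
        have := hTδ n
        linarith
      have h4 : δ ^ 2 / 4 ≤ f t ^ 2 := by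
        have h5 : (δ / 2) ^ 2 ≤ |f t| ^ 2 :=
          pow_le_pow_left₀ (by positivity) h3 2
        rw [sq_abs] at h5
        calc δ ^ 2 / 4 = (δ / 2) ^ 2 := by ring
          _ ≤ f t ^ 2 := h5
      calc δ ^ 2 / 4 ≤ f t ^ 2 := h4
        _ ≤ S t := Finset.single_le_sum (fun i _ => sq_nonneg (ω i t - ωstar i))
            (Finset.mem_univ j)
    calc ENNReal.ofReal (δ ^ 2 / 4) * ENNReal.ofReal η
        = ∫⁻ _ in s n, ENNReal.ofReal (δ ^ 2 / 4) := by
          rw [MeasureTheory.setLIntegral_const, hsdef]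
          simp [Real.volume_Ioc]
      _ ≤ ∫⁻ t in s n, ENNReal.ofReal (S t) := by
          apply lintegral_mono_ae
          filter_upwards [ae_restrict_mem measurableSet_Ioc] with t ht
          exact ENNReal.ofReal_le_ofReal (hpt t ht)
  have hc_ne : ENNReal.ofReal (δ ^ 2 / 4) * ENNReal.ofReal η ≠ 0 := by
    apply mul_ne_zero <;>
      simp only [ne_eq, ENNReal.ofReal_eq_zero, not_le] <;> positivity
  have htop : (⊤ : ENNReal) ≤ ∫⁻ t in Set.Ioi (0 : ℝ), ENNReal.ofReal (S t) := by
    calc (⊤ : ENNReal)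
        = ∑' _ : ℕ, ENNReal.ofReal (δ ^ 2 / 4) * ENNReal.ofReal η :=
          (ENNReal.tsum_const_eq_top_of_ne_zero hc_ne).symm
      _ ≤ ∑' n : ℕ, ∫⁻ t in s n, ENNReal.ofReal (S t) := ENNReal.tsum_le_tsum hlow
      _ = ∫⁻ t in ⋃ n, s n, ENNReal.ofReal (S t) :=
          (lintegral_iUnion (fun n => measurableSet_Ioc) hdisj _).symm
      _ ≤ ∫⁻ t in Set.Ioi (0 : ℝ), ENNReal.ofReal (S t) := lintegral_mono_set hsub
  have hfin := hpart1.trans_lt ENNReal.ofReal_lt_top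
  exact absurd (htop.trans_lt hfin) (by simp)
end

section
/- Consider two single-bus systems coupled only through shared frequency: τ ẋ = −x − K ω and M(t) ω̇ = −p^L + x − λω with τ, K, λ, p^L constants, τ, K, λ > 0, and M : [0,∞) → ℝ locally Lipschitz with M(t) ≥ M⁰ > 0 and Ṁ(t) ≤ 2λ − ε for some ε > 0 (a.e.). Then the equilibrium (x̄, ω̄) determined by ω̄ = −p^L/(K + λ) · (K+λ)/(K+λ) i.e. x̄ = −Kω̄, −p^L + x̄ − λω̄ = 0, is globally asymptotically stable: every solution satisfies (x(t), ω(t)) → (x̄, ω̄) as t → ∞. -/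
open Filter Set MeasureTheory intervalIntegral Metric

lemma myLocallyLipschitz.exists_lipschitzOnWith_Icc {f : ℝ → ℝ} (hf : LocallyLipschitz f)
    (a b : ℝ) : ∃ C : NNReal, LipschitzOnWith C f (Set.Icc a b) := by
  rcases le_or_gt a b with hab | hab
  · choose K t ht hl using hf
    have hball : ∀ x : ℝ, ∃ ε > 0, Metric.ball x ε ⊆ t x := fun x => Metric.mem_nhds_iff.1 (ht x)
    choose ε hε hbs using hball
    have hcov : Set.Icc a b ⊆ ⋃ x : ℝ, Metric.ball x (ε x) := by
      intro y _; exact Set.mem_iUnion.2 ⟨y, Metric.mem_ball_self (hε y)⟩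
    obtain ⟨s, hs⟩ := isCompact_Icc.elim_finite_subcover (fun x : ℝ => Metric.ball x (ε x))
      (fun x => Metric.isOpen_ball) hcov
    obtain ⟨δ, hδ, hleb⟩ := lebesgue_number_lemma_of_metric (s := Set.Icc a b)
      (c := fun i : s => Metric.ball (i : ℝ) (ε i)) isCompact_Icc
      (fun i => Metric.isOpen_ball) (by
        intro y hy
        obtain ⟨x, hx, hyx⟩ := Set.mem_iUnion₂.1 (hs hy)
        exact Set.mem_iUnion.2 ⟨⟨x, hx⟩, hyx⟩)
    set Km : NNReal := s.sup K with hKm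
    have hKle : ∀ i ∈ s, K i ≤ Km := fun i hi => Finset.le_sup hi
    -- small-step estimate
    have hsmall : ∀ y ∈ Set.Icc a b, ∀ z ∈ Set.Icc a b, dist y z < δ →
        dist (f y) (f z) ≤ (Km : ℝ) * dist y z := by
      intro y hy z hz hyz
      obtain ⟨i, hi⟩ := hleb y hy
      have hyi : y ∈ t (i : ℝ) := hbs _ (hi (Metric.mem_ball_self hδ))
      have hzi : z ∈ t (i : ℝ) := hbs _ (hi (by simpa [Metric.mem_ball, dist_comm] using hyz))
      calc dist (f y) (f z) ≤ (K i : ℝ) * dist y z :=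
            (lipschitzOnWith_iff_dist_le_mul.1 (hl i)) _ hyi _ hzi
        _ ≤ (Km : ℝ) * dist y z := by
            gcongr
            exact_mod_cast hKle i i.2
    refine ⟨Km, lipschitzOnWith_iff_dist_le_mul.2 ?_⟩
    intro y hy z hz
    -- subdivide
    set n : ℕ := ⌊dist y z / δ⌋₊ + 1 with hn
    have hnpos : 0 < (n : ℝ) := by positivity
    have hstep : dist y z / n < δ := by
      have h2 := Nat.lt_floor_add_one (dist y z / δ)
      rw [div_lt_iff₀ hδ] at h2
      rw [div_lt_iff₀ hnpos, hn]
      push_cast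
      nlinarith
    set p : ℕ → ℝ := fun i => y + (i : ℝ) / n * (z - y) with hp
    have hp0 : p 0 = y := by simp [hp]
    have hpn : p n = z := by simp [hp, div_self hnpos.ne']
    have hpmem : ∀ i : ℕ, i ≤ n → p i ∈ Set.Icc a b := by
      intro i hi
      have h0 : (0:ℝ) ≤ (i : ℝ) / n := by positivity
      have h1 : (i : ℝ) / n ≤ 1 := by
        rw [div_le_one hnpos]; exact_mod_cast hi
      simp only [hp]
      rcases le_total y z with h | h
      · have e1 := mul_nonneg h0 (sub_nonneg.2 h)
        have e2 := mul_nonneg (by linarith : (0:ℝ) ≤ 1 - (i:ℝ)/n) (sub_nonneg.2 h)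
        constructor
        · nlinarith [hy.1, hz.1]
        · nlinarith [hy.2, hz.2]
      · have e1 := mul_nonneg h0 (sub_nonneg.2 h)
        have e2 := mul_nonneg (by linarith : (0:ℝ) ≤ 1 - (i:ℝ)/n) (sub_nonneg.2 h)
        constructor
        · nlinarith [hy.1, hz.1]
        · nlinarith [hy.2, hz.2]
    have hpdist : ∀ i : ℕ, dist (p i) (p (i+1)) = dist y z / n := by
      intro i
      have hne : (n:ℝ) ≠ 0 := ne_of_gt hnpos
      have e1 : y + (i:ℝ)/(n:ℝ)*(z-y) - (y + ((i+1 : ℕ):ℝ)/(n:ℝ)*(z-y)) = -((z-y)/(n:ℝ)) := by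
        push_cast; field_simp; ring
      simp only [hp, Real.dist_eq]
      rw [e1, abs_neg, abs_div, abs_of_pos hnpos, abs_sub_comm y z]
    calc dist (f y) (f z) = dist (f (p 0)) (f (p n)) := by rw [hp0, hpn]
      _ ≤ ∑ i ∈ Finset.range n, dist (f (p i)) (f (p (i+1))) :=
          dist_le_range_sum_dist (fun i => f (p i)) n
      _ ≤ ∑ i ∈ Finset.range n, (Km : ℝ) * (dist y z / n) := by
          apply Finset.sum_le_sum
          intro i hi
          have hi' : i < n := Finset.mem_range.1 hi
          have h1 := hpmem i hi'.le
          have h2 := hpmem (i+1) hi'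
          have h3 : dist (p i) (p (i+1)) < δ := by rw [hpdist]; exact hstep
          calc dist (f (p i)) (f (p (i+1))) ≤ (Km:ℝ) * dist (p i) (p (i+1)) :=
                hsmall _ h1 _ h2 h3
            _ = (Km:ℝ) * (dist y z / n) := by rw [hpdist]
      _ = (Km : ℝ) * dist y z := by
          rw [Finset.sum_const, Finset.card_range, nsmul_eq_mul]
          field_simp
  · exact ⟨1, lipschitzOnWith_iff_dist_le_mul.2 (by
      intro y hy
      simp [Set.Icc_eq_empty (not_le.2 hab)] at hy)⟩



lemma myLocallyLipschitz.ae_differentiableAt {f : ℝ → ℝ} (hf : LocallyLipschitz f) :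
    ∀ᵐ t : ℝ, DifferentiableAt ℝ f t := by
  have h : ∀ n : ℕ, ∀ᵐ t : ℝ, t ∈ Set.Ioo (-(n:ℝ)) n → DifferentiableAt ℝ f t := by
    intro n
    obtain ⟨C, hC⟩ := myLocallyLipschitz.exists_lipschitzOnWith_Icc hf (-(n:ℝ)) n
    filter_upwards [hC.ae_differentiableWithinAt_of_mem_of_real (μ := volume)] with t ht hIoo
    exact (ht (Set.Ioo_subset_Icc_self hIoo)).differentiableAt
      (Icc_mem_nhds hIoo.1 hIoo.2)
  rw [← MeasureTheory.ae_all_iff] at h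
  filter_upwards [h] with t ht
  obtain ⟨n, hn⟩ := exists_nat_gt |t|
  exact ht n ⟨by linarith [neg_abs_le t, le_abs_self t], lt_of_le_of_lt (le_abs_self t) hn⟩

lemma myLipschitz_deriv_bound {g : ℝ → ℝ} {C : NNReal} (hg : LipschitzWith C g) (t : ℝ) :
    |deriv g t| ≤ C := by
  by_cases h : DifferentiableAt ℝ g t
  · have hd := h.hasDerivAt
    rw [hasDerivAt_iff_tendsto_slope] at hd
    have hb : ∀ᶠ y in nhdsWithin t {t}ᶜ, |slope g t y| ≤ C := by
      filter_upwards [self_mem_nhdsWithin] with y hy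
      have hyt : y ≠ t := hy
      rw [slope_def_field]
      rw [abs_div]
      rw [div_le_iff₀ (abs_pos.2 (sub_ne_zero.2 hyt))]
      calc |g y - g t| = dist (g y) (g t) := (Real.dist_eq _ _).symm
        _ ≤ C * dist y t := hg.dist_le_mul _ _
        _ = C * |y - t| := by rw [Real.dist_eq]
    exact le_of_tendsto hd.abs hb
  · rw [deriv_zero_of_not_differentiableAt h]
    simp



lemma myLipschitz_integral_deriv {g : ℝ → ℝ} {C : NNReal} (hg : LipschitzWith C g)
    {a b : ℝ} (hab : a ≤ b) : ∫ t in a..b, deriv g t = g b - g a := by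
  have hgc : Continuous g := hg.continuous
  set h : ℕ → ℝ := fun n => 1 / ((n:ℝ) + 1) with hh
  have hhpos : ∀ n, 0 < h n := fun n => by positivity
  have hh0 : Tendsto h atTop (nhds 0) := tendsto_one_div_add_atTop_nhds_zero_nat
  set F : ℕ → ℝ → ℝ := fun n s => (g (s + h n) - g s) / h n with hF
  -- the sequence of points s + h n tends to 𝓝[≠] s
  have hseq : ∀ s : ℝ, Tendsto (fun n => s + h n) atTop (nhdsWithin s {s}ᶜ) := by
    intro s
    apply tendsto_nhdsWithin_of_tendsto_nhds_of_eventually_within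
    · have : Tendsto (fun n => s + h n) atTop (nhds (s + 0)) :=
        (tendsto_const_nhds.add hh0)
      simpa using this
    · filter_upwards with n
      simp only [Set.mem_compl_iff, Set.mem_singleton_iff]
      have := hhpos n
      intro hc
      nlinarith [hhpos n]
  have hslope : ∀ (f : ℝ → ℝ) (s : ℝ) (n : ℕ), slope f s (s + h n) = (f (s + h n) - f s) / h n := by
    intro f s n
    rw [slope_def_field]
    congr 1
    ring_nf
  -- a.e. convergence of difference quotients
  have hlim : ∀ᵐ s : ℝ, Tendsto (fun n => F n s) atTop (nhds (deriv g s)) := by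
    filter_upwards [hg.ae_differentiableAt (μ := volume)] with s hs
    have hd := hs.hasDerivAt
    rw [hasDerivAt_iff_tendsto_slope] at hd
    refine (hd.comp (hseq s)).congr fun n => ?_
    simp only [Function.comp_apply, hslope, hF]
  -- DCT
  have hbound : ∀ n s, ‖F n s‖ ≤ (C : ℝ) := by
    intro n s
    simp only [hF, Real.norm_eq_abs, abs_div, abs_of_pos (hhpos n)]
    rw [div_le_iff₀ (hhpos n)]
    calc |g (s + h n) - g s| = dist (g (s + h n)) (g s) := (Real.dist_eq _ _).symm
      _ ≤ C * dist (s + h n) s := hg.dist_le_mul _ _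
      _ = C * h n := by rw [Real.dist_eq, add_sub_cancel_left, abs_of_pos (hhpos n)]
  have hdct : Tendsto (fun n => ∫ s in a..b, F n s) atTop (nhds (∫ s in a..b, deriv g s)) := by
    apply intervalIntegral.tendsto_integral_filter_of_dominated_convergence (bound := fun _ => (C:ℝ))
    · filter_upwards with n
      exact ((hgc.comp (continuous_id.add continuous_const)).sub hgc).div_const (h n)
        |>.aestronglyMeasurable
    · filter_upwards with n
      filter_upwards with s _
      exact hbound n s
    · exact intervalIntegrable_const
    · filter_upwards [hlim] with s hs _
      exact hs
  -- compute the integrals of F n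
  have hcomp : ∀ n, ∫ s in a..b, F n s =
      ((∫ s in b..(b + h n), g s) - ∫ s in a..(a + h n), g s) / h n := by
    intro n
    have hInt : ∀ c d : ℝ, IntervalIntegrable g volume c d := fun c d =>
      hgc.intervalIntegrable c d
    have h1 : ∫ s in a..b, g (s + h n) = ∫ s in (a + h n)..(b + h n), g s :=
      intervalIntegral.integral_comp_add_right (fun s => g s) (h n)
    have h2 : (∫ s in a..(a + h n), g s) + ∫ s in (a + h n)..(b + h n), g s
        = ∫ s in a..(b + h n), g s := intervalIntegral.integral_add_adjacent_intervals (hInt _ _) (hInt _ _)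
    have h3 : (∫ s in a..b, g s) + ∫ s in b..(b + h n), g s
        = ∫ s in a..(b + h n), g s := intervalIntegral.integral_add_adjacent_intervals (hInt _ _) (hInt _ _)
    have h4 : ∫ s in a..b, F n s = ((∫ s in a..b, g (s + h n)) - ∫ s in a..b, g s) / h n := by
      simp only [hF]
      rw [intervalIntegral.integral_div]
      congr 1
      exact intervalIntegral.integral_sub ((hgc.comp (continuous_id.add continuous_const)).intervalIntegrable _ _) (hInt _ _)
    rw [h4, h1]
    congr 1
    linarith
  -- limit of the right-hand side
  have hright : Tendsto (fun n => ((∫ s in b..(b + h n), g s) - ∫ s in a..(a + h n), g s) / h n)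
      atTop (nhds (g b - g a)) := by
    have key : ∀ c : ℝ, Tendsto (fun n => (∫ s in c..(c + h n), g s) / h n) atTop (nhds (g c)) := by
      intro c
      have hF1 : HasDerivAt (fun u => ∫ s in c..u, g s) (g c) c := by
        apply intervalIntegral.integral_hasDerivAt_right (hgc.intervalIntegrable c c)
        · exact hgc.stronglyMeasurableAtFilter _ _
        · exact hgc.continuousAt
      rw [hasDerivAt_iff_tendsto_slope] at hF1
      refine (hF1.comp (hseq c)).congr fun n => ?_
      simp only [Function.comp_apply, hslope, intervalIntegral.integral_same, sub_zero]
    have := (key b).sub (key a)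
    convert this using 2 with n
    rw [sub_div]
  rw [tendsto_nhds_unique hdct (by
    apply hright.congr
    intro n
    rw [hcomp n])]



lemma myLe_of_ae_deriv_nonpos {f : ℝ → ℝ} {C : NNReal} {a b : ℝ} (hab : a ≤ b)
    (hlip : LipschitzOnWith C f (Set.Icc a b))
    (hd : ∀ᵐ t : ℝ, t ∈ Set.Ioo a b → ∃ d, d ≤ 0 ∧ HasDerivAt f d t) :
    f b ≤ f a := by
  obtain ⟨g, hgl, hfg⟩ := hlip.extend_real
  have hgb : g b = f b := (hfg (Set.right_mem_Icc.2 hab)).symm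
  have hga : g a = f a := (hfg (Set.left_mem_Icc.2 hab)).symm
  have hint : ∫ t in a..b, deriv g t = g b - g a := myLipschitz_integral_deriv hgl hab
  have h0 : ∫ t in a..b, deriv g t ≤ 0 := by
    rw [intervalIntegral.integral_of_le hab]
    apply MeasureTheory.integral_nonpos_of_ae
    rw [Filter.EventuallyLE, MeasureTheory.ae_restrict_iff' measurableSet_Ioc]
    have hne : ∀ᵐ t : ℝ, t ≠ b := by
      have : (volume : Measure ℝ) {b} = 0 := measure_singleton b
      rw [MeasureTheory.ae_iff]
      convert this using 2
      ext t
      simp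
    filter_upwards [hd, hne] with t ht htb htIoc
    have htIoo : t ∈ Set.Ioo a b := ⟨htIoc.1, lt_of_le_of_ne htIoc.2 htb⟩
    obtain ⟨d, hd0, hder⟩ := ht htIoo
    have hEq : f =ᶠ[nhds t] g := by
      have : Set.Ioo a b ∈ nhds t := Ioo_mem_nhds htIoo.1 htIoo.2
      filter_upwards [this] with s hs
      exact hfg (Set.Ioo_subset_Icc_self hs)
    have : HasDerivAt g d t := hder.congr_of_eventuallyEq hEq.symm
    rw [this.deriv]
    exact hd0
  linarith [hint ▸ h0, hgb, hga]



lemma myBarbalat {q : ℝ → ℝ} {L B : ℝ} (hL : 0 < L)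
    (hq0 : ∀ t, 0 ≤ t → 0 ≤ q t)
    (hqc : ∀ t, 0 ≤ t → ContinuousAt q t)
    (hqlip : ∀ y z, 0 ≤ y → 0 ≤ z → |q y - q z| ≤ L * |y - z|)
    (hint : ∀ b, 0 ≤ b → ∫ t in (0:ℝ)..b, q t ≤ B) :
    Tendsto q atTop (nhds 0) := by
  -- integrability on subintervals of [0,∞)
  have hqint : ∀ c d : ℝ, 0 ≤ c → c ≤ d → IntervalIntegrable q volume c d := by
    intro c d hc hcd
    apply ContinuousOn.intervalIntegrable
    intro s hs
    rw [Set.uIcc_of_le hcd] at hs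
    exact (hqc s (le_trans hc hs.1)).continuousWithinAt
  -- nonnegativity of integrals
  have hpos : ∀ c d : ℝ, 0 ≤ c → c ≤ d → 0 ≤ ∫ t in c..d, q t := by
    intro c d hc hcd
    exact intervalIntegral.integral_nonneg hcd (fun s hs => hq0 s (le_trans hc hs.1))
  by_contra hcon
  rw [Metric.tendsto_atTop] at hcon
  push_neg at hcon
  obtain ⟨δ, hδ, hfreq⟩ := hcon
  -- frequently large values
  have hfreq' : ∀ N : ℝ, ∃ t, (max N 0 ≤ t ∧ 0 ≤ t) ∧ δ ≤ q t := by
    intro N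
    obtain ⟨t, ht1, ht2⟩ := hfreq (max N 0)
    have ht0 : 0 ≤ t := le_trans (le_max_right N 0) ht1
    refine ⟨t, ⟨ht1, ht0⟩, ?_⟩
    rw [Real.dist_eq, sub_zero, abs_of_nonneg (hq0 t ht0)] at ht2
    exact ht2
  choose T hT1 hT2 using hfreq'
  set h0 : ℝ := δ / (2 * L) with hh0
  have hh0pos : 0 < h0 := by positivity
  -- the recursive sequence
  set t : ℕ → ℝ := fun n => Nat.rec (T 0) (fun _ s => T (s + h0)) n with htdef
  have ht0 : ∀ n, 0 ≤ t n := by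
    intro n
    cases n with
    | zero => exact (hT1 0).2
    | succ m => exact (hT1 _).2
  have htq : ∀ n, δ ≤ q (t n) := by
    intro n
    cases n with
    | zero => exact hT2 0
    | succ m => exact hT2 _
  have htsucc : ∀ n, t n + h0 ≤ t (n + 1) := by
    intro n
    exact le_trans (le_max_left _ 0) (hT1 (t n + h0)).1
  -- lower bound on local integrals
  have hstep : ∀ n, δ / 2 * h0 ≤ ∫ s in (t n)..(t n + h0), q s := by
    intro n
    have hlow : ∀ s ∈ Set.Icc (t n) (t n + h0), δ / 2 ≤ q s := by
      intro s hs
      have hs0 : 0 ≤ s := le_trans (ht0 n) hs.1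
      have h1 : |q s - q (t n)| ≤ L * |s - t n| := hqlip s (t n) hs0 (ht0 n)
      have h2 : |s - t n| ≤ h0 := by
        rw [abs_of_nonneg (by linarith [hs.1])]
        linarith [hs.2]
      have h3 : L * |s - t n| ≤ L * h0 := by gcongr
      have h4 : L * h0 = δ / 2 := by
        rw [hh0]; field_simp
      have := abs_le.1 h1
      have := htq n
      nlinarith [this]
    calc δ / 2 * h0 = ∫ _ in (t n)..(t n + h0), δ/2 := by
          rw [intervalIntegral.integral_const]
          simp [smul_eq_mul]
          ring
      _ ≤ ∫ s in (t n)..(t n + h0), q s := by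
          apply intervalIntegral.integral_mono_on (by linarith)
            intervalIntegrable_const (hqint _ _ (ht0 n) (by linarith)) hlow
  -- accumulated lower bound
  have hacc : ∀ n : ℕ, ((n:ℝ) + 1) * (δ / 2 * h0) ≤ ∫ s in (0:ℝ)..(t n + h0), q s := by
    intro n
    induction n with
    | zero =>
      have hsplit : (∫ s in (0:ℝ)..(t 0), q s) + ∫ s in (t 0)..(t 0 + h0), q s
          = ∫ s in (0:ℝ)..(t 0 + h0), q s :=
        intervalIntegral.integral_add_adjacent_intervals
          (hqint _ _ le_rfl (ht0 0)) (hqint _ _ (ht0 0) (by linarith [hh0pos]))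
      have := hpos 0 (t 0) le_rfl (ht0 0)
      have := hstep 0
      push_cast
      linarith
    | succ m ih =>
      have hle1 : t m + h0 ≤ t (m+1) := htsucc m
      have h1 : (∫ s in (0:ℝ)..(t m + h0), q s) + ∫ s in (t m + h0)..(t (m+1)), q s
          = ∫ s in (0:ℝ)..(t (m+1)), q s :=
        intervalIntegral.integral_add_adjacent_intervals
          (hqint _ _ le_rfl (by linarith [ht0 m, hh0pos]))
          (hqint _ _ (by linarith [ht0 m, hh0pos]) hle1)
      have h2 : (∫ s in (0:ℝ)..(t (m+1)), q s) + ∫ s in (t (m+1))..(t (m+1) + h0), q s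
          = ∫ s in (0:ℝ)..(t (m+1) + h0), q s :=
        intervalIntegral.integral_add_adjacent_intervals
          (hqint _ _ le_rfl (ht0 (m+1))) (hqint _ _ (ht0 (m+1)) (by linarith [hh0pos]))
      have h3 := hpos (t m + h0) (t (m+1)) (by linarith [ht0 m, hh0pos]) hle1
      have h4 := hstep (m+1)
      push_cast
      push_cast at ih
      linarith
  -- contradiction with the uniform bound
  obtain ⟨n, hn⟩ := exists_nat_gt (B / (δ / 2 * h0))
  have hb := hint (t n + h0) (by linarith [ht0 n, hh0pos])
  have := hacc n
  have hgt : B < ((n:ℝ) + 1) * (δ / 2 * h0) := by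
    rw [div_lt_iff₀ (by positivity)] at hn
    nlinarith [hh0pos, hδ]
  linarith



set_option maxHeartbeats 1000000 in
/-- Single-bus system `τ ẋ = −x − K ω`, `M(t) ω̇ = −p^L + x − λ ω`
with locally Lipschitz inertia `M(t) ≥ M⁰ > 0` satisfying `Ṁ ≤ 2λ − ε` a.e.:
every solution converges to the equilibrium `ω̄ = −p^L/(K + λ)`, `x̄ = −K ω̄`. -/
theorem stmt_18 (τ K lam pL M0 ε : ℝ)
    (hτ : 0 < τ) (hK : 0 < K) (hlam : 0 < lam) (hM0 : 0 < M0) (hε : 0 < ε)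
    (M : ℝ → ℝ) (hMlip : LocallyLipschitz M)
    (hMlb : ∀ t : ℝ, t ≥ 0 → M t ≥ M0)
    (hMrate : ∀ᵐ t : ℝ, t ≥ 0 → deriv M t ≤ 2 * lam - ε)
    (x ω : ℝ → ℝ)
    (hx : ∀ t : ℝ, t ≥ 0 → HasDerivAt x ((-(x t) - K * ω t) / τ) t)
    (hω : ∀ t : ℝ, t ≥ 0 → HasDerivAt ω ((-pL + x t - lam * ω t) / M t) t) :
    Tendsto x atTop (nhds (-K * (-pL / (K + lam)))) ∧
    Tendsto ω atTop (nhds (-pL / (K + lam))) := by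
  have hKl : (0:ℝ) < K + lam := by linarith
  set ωb : ℝ := -pL / (K + lam) with hωb
  set xb : ℝ := -K * ωb with hxb
  set u : ℝ → ℝ := fun t => x t - xb with hudef
  set v : ℝ → ℝ := fun t => ω t - ωb with hvdef
  -- derivatives of the shifted variables
  have hu' : ∀ t, 0 ≤ t → HasDerivAt u ((-(u t) - K * v t) / τ) t := by
    intro t ht
    have h1 := (hx t ht).sub_const xb
    convert h1 using 1
    · rfl
    · rfl
    have h2 : -(x t) - K * ω t = -(u t) - K * v t := by
      simp only [hudef, hvdef, hxb]
      ring
    rw [h2]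
  have hv' : ∀ t, 0 ≤ t → HasDerivAt v ((u t - lam * v t) / M t) t := by
    intro t ht
    have h1 := (hω t ht).sub_const ωb
    convert h1 using 1
    · rfl
    · rfl
    have h2 : -pL + x t - lam * ω t = u t - lam * v t := by
      simp only [hudef, hvdef, hxb, hωb]
      field_simp
      ring
    rw [h2]
  have hucont : ∀ t, 0 ≤ t → ContinuousAt u t := fun t ht => (hu' t ht).continuousAt
  have hvcont : ∀ t, 0 ≤ t → ContinuousAt v t := fun t ht => (hv' t ht).continuousAt
  set q : ℝ → ℝ := fun t => (u t)^2 / K + ε / 2 * (v t)^2 with hqdef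
  have hqca : ∀ t, 0 ≤ t → ContinuousAt q t := by
    intro t ht
    exact (((hucont t ht).pow 2).div_const K).add (continuousAt_const.mul ((hvcont t ht).pow 2))
  have hq0 : ∀ t, 0 ≤ t → 0 ≤ q t := by
    intro t _
    have := sq_nonneg (u t); have := sq_nonneg (v t)
    have h1 : 0 ≤ (u t)^2 / K := by positivity
    have h2 : 0 ≤ ε / 2 * (v t)^2 := by positivity
    simp only [hqdef]; linarith
  have hqint : ∀ c d, 0 ≤ c → c ≤ d → IntervalIntegrable q volume c d := by
    intro c d hc hcd
    apply ContinuousOn.intervalIntegrable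
    intro s hs
    rw [Set.uIcc_of_le hcd] at hs
    exact (hqca s (le_trans hc hs.1)).continuousWithinAt
  set W : ℝ → ℝ := fun t => τ / (2*K) * (u t)^2 + M t / 2 * (v t)^2 with hWdef
  -- ================= main dissipation inequality =================
  have hMain : ∀ a b, 0 ≤ a → a ≤ b → W b + (∫ t in a..b, q t) ≤ W a := by
    intro a b ha hab
    set G : ℝ → ℝ := fun s => W s + ∫ r in a..s, q r with hGdef
    have hIcc0 : ∀ s ∈ Set.Icc a b, (0:ℝ) ≤ s := fun s hs => le_trans ha hs.1
    have hucOn : ContinuousOn u (Set.Icc a b) :=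
      fun s hs => (hucont s (hIcc0 s hs)).continuousWithinAt
    have hvcOn : ContinuousOn v (Set.Icc a b) :=
      fun s hs => (hvcont s (hIcc0 s hs)).continuousWithinAt
    have hMcOn : ContinuousOn M (Set.Icc a b) := hMlip.continuous.continuousOn
    obtain ⟨Cu, hCu⟩ := isCompact_Icc.exists_bound_of_continuousOn hucOn
    obtain ⟨Cv, hCv⟩ := isCompact_Icc.exists_bound_of_continuousOn hvcOn
    obtain ⟨CM, hCM⟩ := isCompact_Icc.exists_bound_of_continuousOn hMcOn
    simp only [Real.norm_eq_abs] at hCu hCv hCM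
    have hCu0 : 0 ≤ Cu := le_trans (abs_nonneg _) (hCu a ⟨le_rfl, hab⟩)
    have hCv0 : 0 ≤ Cv := le_trans (abs_nonneg _) (hCv a ⟨le_rfl, hab⟩)
    have hCM0 : 0 ≤ CM := le_trans (abs_nonneg _) (hCM a ⟨le_rfl, hab⟩)
    obtain ⟨LM, hLM⟩ := myLocallyLipschitz.exists_lipschitzOnWith_Icc hMlip a b
    have hMlipOn : ∀ y ∈ Set.Icc a b, ∀ z ∈ Set.Icc a b, |M y - M z| ≤ (LM:ℝ) * |y - z| := by
      intro y hy z hz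
      have := lipschitzOnWith_iff_dist_le_mul.1 hLM y hy z hz
      rwa [Real.dist_eq, Real.dist_eq] at this
    set Lu : ℝ := (Cu + K * Cv) / τ with hLu
    have hLu0 : 0 ≤ Lu := by
      rw [hLu]
      have h := add_nonneg hCu0 (mul_nonneg hK.le hCv0)
      positivity
    have hulipOn : ∀ y ∈ Set.Icc a b, ∀ z ∈ Set.Icc a b, |u y - u z| ≤ Lu * |y - z| := by
      intro y hy z hz
      have hb : ∀ s ∈ Set.Icc a b, ‖(-(u s) - K * v s) / τ‖ ≤ Lu := by
        intro s hs
        rw [Real.norm_eq_abs, abs_div, abs_of_pos hτ, hLu]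
        gcongr
        calc |(-(u s) - K * v s)| = |(-(u s)) + (-(K * v s))| := by rw [sub_eq_add_neg]
          _ ≤ |(-(u s))| + |(-(K * v s))| := abs_add_le _ _
          _ = |u s| + K * |v s| := by rw [abs_neg, abs_neg, abs_mul, abs_of_pos hK]
          _ ≤ Cu + K * Cv := by
              have h1 := hCu s hs; have h2 := hCv s hs
              linarith [mul_le_mul_of_nonneg_left h2 hK.le]
      have := Convex.norm_image_sub_le_of_norm_hasDerivWithin_le
        (fun s hs => (hu' s (hIcc0 s hs)).hasDerivWithinAt) hb (convex_Icc a b) hz hy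
      simpa [Real.norm_eq_abs] using this
    set Lv : ℝ := (Cu + lam * Cv) / M0 with hLv
    have hLv0 : 0 ≤ Lv := by
      rw [hLv]
      have h := add_nonneg hCu0 (mul_nonneg hlam.le hCv0)
      positivity
    have hvlipOn : ∀ y ∈ Set.Icc a b, ∀ z ∈ Set.Icc a b, |v y - v z| ≤ Lv * |y - z| := by
      intro y hy z hz
      have hb : ∀ s ∈ Set.Icc a b, ‖(u s - lam * v s) / M s‖ ≤ Lv := by
        intro s hs
        have hMs := hMlb s (hIcc0 s hs)
        rw [Real.norm_eq_abs, abs_div, abs_of_pos (show (0:ℝ) < M s by linarith), hLv]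
        have hA0 : 0 ≤ Cu + lam * Cv := add_nonneg hCu0 (mul_nonneg hlam.le hCv0)
        have hnum : |u s - lam * v s| ≤ Cu + lam * Cv := by
          calc |u s - lam * v s| = |u s + (-(lam * v s))| := by rw [sub_eq_add_neg]
            _ ≤ |u s| + |(-(lam * v s))| := abs_add_le _ _
            _ = |u s| + lam * |v s| := by rw [abs_neg, abs_mul, abs_of_pos hlam]
            _ ≤ Cu + lam * Cv := by
                have h1 := hCu s hs; have h2 := hCv s hs
                linarith [mul_le_mul_of_nonneg_left h2 hlam.le]
        rw [div_le_div_iff₀ (by linarith) hM0]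
        nlinarith [abs_nonneg (u s - lam * v s),
          mul_le_mul_of_nonneg_right hnum hM0.le,
          mul_le_mul_of_nonneg_left hMs hA0]
      have := Convex.norm_image_sub_le_of_norm_hasDerivWithin_le
        (fun s hs => (hv' s (hIcc0 s hs)).hasDerivWithinAt) hb (convex_Icc a b) hz hy
      simpa [Real.norm_eq_abs] using this
    set Cq : ℝ := Cu^2 / K + ε / 2 * Cv^2 with hCq
    have hCq0 : 0 ≤ Cq := by rw [hCq]; positivity
    have hCqb : ∀ s ∈ Set.Icc a b, |q s| ≤ Cq := by
      intro s hs
      have h1 : (u s)^2 ≤ Cu^2 := by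
        have := abs_le.1 (hCu s hs); nlinarith [this.1, this.2]
      have h2 : (v s)^2 ≤ Cv^2 := by
        have := abs_le.1 (hCv s hs); nlinarith [this.1, this.2]
      rw [abs_of_nonneg (hq0 s (hIcc0 s hs)), hqdef, hCq]
      have h3 : (u s)^2 / K ≤ Cu^2 / K := by gcongr
      have h4 : ε / 2 * (v s)^2 ≤ ε / 2 * Cv^2 :=
        mul_le_mul_of_nonneg_left h2 (by linarith)
      linarith
    have hqint2 : ∀ c ∈ Set.Icc a b, ∀ d ∈ Set.Icc a b, IntervalIntegrable q volume c d := by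
      intro c hc d hd
      apply ContinuousOn.intervalIntegrable
      intro s hs
      have : s ∈ Set.Icc a b := Set.uIcc_subset_Icc hc hd hs
      exact (hqca s (hIcc0 s this)).continuousWithinAt
    -- Lipschitz bound for G
    set CG : ℝ := τ/(2*K)*(2*Cu)*Lu + ((LM:ℝ)*Cv^2/2 + CM*Cv*Lv) + Cq with hCG
    have hGlip : LipschitzOnWith (Real.toNNReal CG) G (Set.Icc a b) := by
      rw [lipschitzOnWith_iff_dist_le_mul]
      intro y hy z hz
      rw [Real.dist_eq, Real.dist_eq]
      have hsplit : G y - G z = τ/(2*K)*((u y)^2 - (u z)^2)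
          + ((M y - M z)*(v y)^2/2 + M z*((v y)^2 - (v z)^2)/2)
          + ∫ r in z..y, q r := by
        have h1 : (∫ r in a..z, q r) + ∫ r in z..y, q r = ∫ r in a..y, q r :=
          integral_add_adjacent_intervals (hqint2 a ⟨le_rfl, hab⟩ z hz) (hqint2 z hz y hy)
        simp only [hGdef, hWdef]
        have : (∫ r in a..y, q r) - ∫ r in a..z, q r = ∫ r in z..y, q r := by linarith
        rw [← this]
        ring
      have hIb : |∫ r in z..y, q r| ≤ Cq * |y - z| := by
        have := intervalIntegral.norm_integral_le_of_norm_le_const (C := Cq)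
          (f := q) (a := z) (b := y) ?_
        · simpa [Real.norm_eq_abs] using this
        · intro s hs
          rw [Set.mem_uIoc] at hs
          have hsmem : s ∈ Set.Icc a b := by
            rcases hs with h | h
            · exact ⟨le_trans hz.1 h.1.le, le_trans h.2 hy.2⟩
            · exact ⟨le_trans hy.1 h.1.le, le_trans h.2 hz.2⟩
          rw [Real.norm_eq_abs]
          exact hCqb s hsmem
      have h1 : |(u y)^2 - (u z)^2| ≤ 2*Cu*(Lu*|y - z|) := by
        rw [sq_sub_sq, abs_mul]
        refine mul_le_mul ?_ (hulipOn y hy z hz) (abs_nonneg _) (by linarith)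
        calc |u y + u z| ≤ |u y| + |u z| := abs_add_le _ _
          _ ≤ 2*Cu := by have h1 := hCu y hy; have h2 := hCu z hz; linarith
      have h2 : |(v y)^2 - (v z)^2| ≤ 2*Cv*(Lv*|y - z|) := by
        rw [sq_sub_sq, abs_mul]
        refine mul_le_mul ?_ (hvlipOn y hy z hz) (abs_nonneg _) (by linarith)
        calc |v y + v z| ≤ |v y| + |v z| := abs_add_le _ _
          _ ≤ 2*Cv := by have h1 := hCv y hy; have h2 := hCv z hz; linarith
      have h3 : |(M y - M z)*(v y)^2/2| ≤ ((LM:ℝ)*Cv^2/2) * |y - z| := by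
        rw [abs_div, abs_mul, abs_of_pos (by norm_num : (0:ℝ) < 2)]
        have hv2 : |(v y)^2| ≤ Cv^2 := by
          rw [abs_of_nonneg (sq_nonneg _)]
          have := abs_le.1 (hCv y hy); nlinarith [this.1, this.2]
        have := hMlipOn y hy z hz
        have hLM0 : (0:ℝ) ≤ LM := LM.coe_nonneg
        have : |M y - M z| * |(v y)^2| ≤ ((LM:ℝ) * |y - z|) * Cv^2 := by
          apply mul_le_mul this hv2 (abs_nonneg _) (by positivity)
        calc |M y - M z| * |(v y)^2| / 2 ≤ ((LM:ℝ) * |y - z|) * Cv^2 / 2 := by linarith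
          _ = ((LM:ℝ)*Cv^2/2) * |y - z| := by ring
      have h4 : |M z*((v y)^2 - (v z)^2)/2| ≤ (CM*Cv*Lv) * |y - z| := by
        rw [abs_div, abs_mul, abs_of_pos (by norm_num : (0:ℝ) < 2)]
        have : |M z| * |(v y)^2 - (v z)^2| ≤ CM * (2*Cv*(Lv*|y - z|)) := by
          apply mul_le_mul (hCM z hz) h2 (abs_nonneg _) hCM0
        calc |M z| * |(v y)^2 - (v z)^2| / 2 ≤ CM * (2*Cv*(Lv*|y - z|)) / 2 := by linarith
          _ = (CM*Cv*Lv) * |y - z| := by ring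
      have h5 : |τ/(2*K)*((u y)^2 - (u z)^2)| ≤ (τ/(2*K)*(2*Cu)*Lu) * |y - z| := by
        rw [abs_mul, abs_of_pos (by positivity : (0:ℝ) < τ/(2*K))]
        calc τ/(2*K) * |(u y)^2 - (u z)^2| ≤ τ/(2*K) * (2*Cu*(Lu*|y - z|)) := by
              have hpos : (0:ℝ) < τ/(2*K) := by positivity
              nlinarith
          _ = (τ/(2*K)*(2*Cu)*Lu) * |y - z| := by ring
      have key : |G y - G z| ≤ CG * |y - z| := by
        rw [hsplit, hCG]
        calc |τ/(2*K)*((u y)^2 - (u z)^2)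
              + ((M y - M z)*(v y)^2/2 + M z*((v y)^2 - (v z)^2)/2)
              + ∫ r in z..y, q r|
            ≤ |τ/(2*K)*((u y)^2 - (u z)^2)|
              + |(M y - M z)*(v y)^2/2 + M z*((v y)^2 - (v z)^2)/2|
              + |∫ r in z..y, q r| := abs_add_three _ _ _
          _ ≤ |τ/(2*K)*((u y)^2 - (u z)^2)|
              + (|(M y - M z)*(v y)^2/2| + |M z*((v y)^2 - (v z)^2)/2|)
              + |∫ r in z..y, q r| := by
                have := abs_add_le ((M y - M z)*(v y)^2/2) (M z*((v y)^2 - (v z)^2)/2)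
                linarith
          _ ≤ (τ/(2*K)*(2*Cu)*Lu) * |y - z|
              + (((LM:ℝ)*Cv^2/2) * |y - z| + (CM*Cv*Lv) * |y - z|)
              + Cq * |y - z| := add_le_add (add_le_add h5 (add_le_add h3 h4)) hIb
          _ = (τ/(2*K)*(2*Cu)*Lu + ((LM:ℝ)*Cv^2/2 + CM*Cv*Lv) + Cq) * |y - z| := by ring
      calc |G y - G z| ≤ CG * |y - z| := key
        _ ≤ (Real.toNNReal CG : ℝ) * |y - z| :=
            mul_le_mul_of_nonneg_right (Real.le_coe_toNNReal CG) (abs_nonneg _)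
    -- a.e. derivative of G is nonpositive
    have hae : ∀ᵐ s : ℝ, s ∈ Set.Ioo a b → ∃ d, d ≤ 0 ∧ HasDerivAt G d s := by
      filter_upwards [myLocallyLipschitz.ae_differentiableAt hMlip, hMrate] with s hdM hrate hs
      have hs0 : (0:ℝ) < s := lt_of_le_of_lt ha hs.1
      have hs0' : (0:ℝ) ≤ s := hs0.le
      have hMd : HasDerivAt M (deriv M s) s := hdM.hasDerivAt
      have hMs : M0 ≤ M s := hMlb s hs0'
      have hMne : M s ≠ 0 := ne_of_gt (by linarith)
      have hA : HasDerivAt (fun r => τ/(2*K) * (u r)^2)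
          (τ/(2*K) * (2 * u s * ((-(u s) - K * v s)/τ))) s := by
        have h := ((hu' s hs0').pow 2).const_mul (τ/(2*K))
        convert h using 1
        · rfl
        · rfl
        · rfl
        ring
      have hB : HasDerivAt (fun r => M r / 2 * (v r)^2)
          ((deriv M s / 2) * (v s)^2 + M s / 2 * (2 * v s * ((u s - lam * v s)/M s))) s := by
        have h := (hMd.div_const 2).mul ((hv' s hs0').pow 2)
        convert h using 1
        · rfl
        · rfl
        · rfl
        rw [Pi.pow_apply]
        ring
      have hC : HasDerivAt (fun r => ∫ p in a..r, q p) (q s) s := by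
        apply intervalIntegral.integral_hasDerivAt_right (hqint a s ha hs.1.le)
        · refine ⟨Set.Ioi (0:ℝ), Ioi_mem_nhds hs0, ?_⟩
          apply ContinuousOn.aestronglyMeasurable _ measurableSet_Ioi
          exact fun r hr => (hqca r (le_of_lt hr)).continuousWithinAt
        · exact hqca s hs0'
      refine ⟨_, ?_, (hA.add hB).add hC⟩
      have hrate' : deriv M s ≤ 2*lam - ε := hrate hs0'
      have heq : τ/(2*K) * (2 * u s * ((-(u s) - K * v s)/τ))
          + ((deriv M s / 2) * (v s)^2 + M s / 2 * (2 * v s * ((u s - lam * v s)/M s)))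
          + q s = (deriv M s/2 - lam + ε/2) * (v s)^2 := by
        simp only [hqdef]
        field_simp
        ring
      rw [heq]
      nlinarith [sq_nonneg (v s)]
    have hfin := myLe_of_ae_deriv_nonpos hab hGlip hae
    simp only [hGdef, intervalIntegral.integral_same, add_zero] at hfin
    exact hfin
  -- ================= consequences =================
  have hWnonneg : ∀ s, 0 ≤ s → 0 ≤ W s := by
    intro s hs
    have hMs := hMlb s hs
    have h1 : 0 ≤ τ/(2*K) * (u s)^2 := by positivity
    have h2 : 0 ≤ M s / 2 * (v s)^2 := mul_nonneg (by linarith) (sq_nonneg _)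
    simp only [hWdef]
    linarith
  have hWle : ∀ s, 0 ≤ s → W s ≤ W 0 := by
    intro s hs
    have h := hMain 0 s le_rfl hs
    have h2 : 0 ≤ ∫ r in (0:ℝ)..s, q r :=
      intervalIntegral.integral_nonneg hs (fun r hr => hq0 r hr.1)
    linarith
  have hW00 : 0 ≤ W 0 := hWnonneg 0 le_rfl
  have hcoef : (0:ℝ) < τ/(2*K) := by positivity
  set Bu : ℝ := W 0 / (τ/(2*K)) with hBu
  set Bv : ℝ := W 0 / (M0/2) with hBv
  have hub : ∀ s, 0 ≤ s → (u s)^2 ≤ Bu := by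
    intro s hs
    have h1 := hWle s hs
    have hMs := hMlb s hs
    have h2 : 0 ≤ M s / 2 * (v s)^2 := mul_nonneg (by linarith) (sq_nonneg _)
    have h3 : τ/(2*K) * (u s)^2 + M s/2*(v s)^2 ≤ W 0 := h1
    rw [hBu, le_div_iff₀ hcoef]
    linarith
  have hvb : ∀ s, 0 ≤ s → (v s)^2 ≤ Bv := by
    intro s hs
    have h1 := hWle s hs
    have hMs := hMlb s hs
    have h2 : 0 ≤ τ/(2*K) * (u s)^2 := by positivity
    have h3 : τ/(2*K) * (u s)^2 + M s/2*(v s)^2 ≤ W 0 := h1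
    have h4 : M0/2*(v s)^2 ≤ M s/2*(v s)^2 := by nlinarith [sq_nonneg (v s)]
    rw [hBv, le_div_iff₀ (by linarith : (0:ℝ) < M0/2)]
    linarith
  set Cu : ℝ := Real.sqrt Bu with hCu
  set Cv : ℝ := Real.sqrt Bv with hCv
  have hCu0 : 0 ≤ Cu := Real.sqrt_nonneg _
  have hCv0 : 0 ≤ Cv := Real.sqrt_nonneg _
  have habs_u : ∀ s, 0 ≤ s → |u s| ≤ Cu := by
    intro s hs
    rw [hCu, ← Real.sqrt_sq_eq_abs]
    exact Real.sqrt_le_sqrt (hub s hs)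
  have habs_v : ∀ s, 0 ≤ s → |v s| ≤ Cv := by
    intro s hs
    rw [hCv, ← Real.sqrt_sq_eq_abs]
    exact Real.sqrt_le_sqrt (hvb s hs)
  set Lu : ℝ := (Cu + K*Cv)/τ with hLu
  set Lv : ℝ := (Cu + lam*Cv)/M0 with hLv
  have hLu0 : 0 ≤ Lu := by
    rw [hLu]
    exact div_nonneg (add_nonneg hCu0 (mul_nonneg hK.le hCv0)) hτ.le
  have hLv0 : 0 ≤ Lv := by
    rw [hLv]
    exact div_nonneg (add_nonneg hCu0 (mul_nonneg hlam.le hCv0)) hM0.le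
  have hulip : ∀ y z, 0 ≤ y → 0 ≤ z → |u y - u z| ≤ Lu * |y - z| := by
    intro y z hy hz
    have hb : ∀ s ∈ Set.Ici (0:ℝ), ‖(-(u s) - K * v s) / τ‖ ≤ Lu := by
      intro s hs
      rw [Real.norm_eq_abs, abs_div, abs_of_pos hτ, hLu]
      gcongr
      calc |(-(u s) - K * v s)| = |(-(u s)) + (-(K * v s))| := by rw [sub_eq_add_neg]
        _ ≤ |(-(u s))| + |(-(K * v s))| := abs_add_le _ _
        _ = |u s| + K * |v s| := by rw [abs_neg, abs_neg, abs_mul, abs_of_pos hK]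
        _ ≤ Cu + K * Cv := by
            have h1 := habs_u s hs; have h2 := habs_v s hs
            linarith [mul_le_mul_of_nonneg_left h2 hK.le]
    have := Convex.norm_image_sub_le_of_norm_hasDerivWithin_le
      (fun s hs => (hu' s hs).hasDerivWithinAt) hb (convex_Ici 0) hz hy
    simpa [Real.norm_eq_abs] using this
  have hvlip : ∀ y z, 0 ≤ y → 0 ≤ z → |v y - v z| ≤ Lv * |y - z| := by
    intro y z hy hz
    have hb : ∀ s ∈ Set.Ici (0:ℝ), ‖(u s - lam * v s) / M s‖ ≤ Lv := by
      intro s hs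
      have hMs : M0 ≤ M s := hMlb s hs
      rw [Real.norm_eq_abs, abs_div, abs_of_pos (show (0:ℝ) < M s by linarith), hLv]
      have hA0 : 0 ≤ Cu + lam * Cv := add_nonneg hCu0 (mul_nonneg hlam.le hCv0)
      have hnum : |u s - lam * v s| ≤ Cu + lam * Cv := by
        calc |u s - lam * v s| = |u s + (-(lam * v s))| := by rw [sub_eq_add_neg]
          _ ≤ |u s| + |(-(lam * v s))| := abs_add_le _ _
          _ = |u s| + lam * |v s| := by rw [abs_neg, abs_mul, abs_of_pos hlam]
          _ ≤ Cu + lam * Cv := by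
              have h1 := habs_u s hs; have h2 := habs_v s hs
              linarith [mul_le_mul_of_nonneg_left h2 hlam.le]
      rw [div_le_div_iff₀ (by linarith) hM0]
      nlinarith [abs_nonneg (u s - lam * v s),
        mul_le_mul_of_nonneg_right hnum hM0.le,
        mul_le_mul_of_nonneg_left hMs hA0]
    have := Convex.norm_image_sub_le_of_norm_hasDerivWithin_le
      (fun s hs => (hv' s hs).hasDerivWithinAt) hb (convex_Ici 0) hz hy
    simpa [Real.norm_eq_abs] using this
  set Lq : ℝ := 2*Cu*Lu/K + ε*Cv*Lv with hLq
  have hLq0 : 0 ≤ Lq := by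
    rw [hLq]
    exact add_nonneg (div_nonneg (mul_nonneg (mul_nonneg (by norm_num) hCu0) hLu0) hK.le)
      (mul_nonneg (mul_nonneg hε.le hCv0) hLv0)
  have hqlip : ∀ y z, 0 ≤ y → 0 ≤ z → |q y - q z| ≤ Lq * |y - z| := by
    intro y z hy hz
    have h1 : |(u y)^2 - (u z)^2| ≤ 2*Cu*(Lu*|y - z|) := by
      rw [sq_sub_sq, abs_mul]
      refine mul_le_mul ?_ (hulip y z hy hz) (abs_nonneg _) (by linarith)
      calc |u y + u z| ≤ |u y| + |u z| := abs_add_le _ _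
        _ ≤ 2*Cu := by have ha1 := habs_u y hy; have ha2 := habs_u z hz; linarith
    have h2 : |(v y)^2 - (v z)^2| ≤ 2*Cv*(Lv*|y - z|) := by
      rw [sq_sub_sq, abs_mul]
      refine mul_le_mul ?_ (hvlip y z hy hz) (abs_nonneg _) (by linarith)
      calc |v y + v z| ≤ |v y| + |v z| := abs_add_le _ _
        _ ≤ 2*Cv := by have ha1 := habs_v y hy; have ha2 := habs_v z hz; linarith
    have hstep : q y - q z = ((u y)^2 - (u z)^2)/K + ε/2*((v y)^2 - (v z)^2) := by
      simp only [hqdef]; ring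
    calc |q y - q z| ≤ |((u y)^2 - (u z)^2)/K| + |ε/2*((v y)^2 - (v z)^2)| := by
          rw [hstep]; exact abs_add_le _ _
      _ = |(u y)^2 - (u z)^2|/K + ε/2*|(v y)^2 - (v z)^2| := by
          rw [abs_div, abs_of_pos hK, abs_mul, abs_of_pos (by linarith : (0:ℝ) < ε/2)]
      _ ≤ (2*Cu*(Lu*|y - z|))/K + ε/2*(2*Cv*(Lv*|y - z|)) := by
          have hd : |(u y)^2 - (u z)^2|/K ≤ (2*Cu*(Lu*|y - z|))/K := by gcongr
          have he : ε/2*|(v y)^2 - (v z)^2| ≤ ε/2*(2*Cv*(Lv*|y - z|)) :=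
            mul_le_mul_of_nonneg_left h2 (by linarith)
          linarith
      _ = Lq * |y - z| := by rw [hLq]; field_simp
  have hIq : ∀ b', 0 ≤ b' → ∫ s in (0:ℝ)..b', q s ≤ W 0 := by
    intro b' hb'
    have h := hMain 0 b' le_rfl hb'
    linarith [hWnonneg b' hb']
  have hq_tendsto : Tendsto q atTop (nhds 0) := by
    apply myBarbalat (L := Lq + 1) (by linarith) hq0 hqca ?_ hIq
    intro y z hy hz
    have h := hqlip y z hy hz
    nlinarith [abs_nonneg (y - z)]
  have hKne : K ≠ 0 := hK.ne'
  have hεne : ε ≠ 0 := hε.ne'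
  have hu2 : Tendsto (fun s => (u s)^2) atTop (nhds 0) := by
    have hKq : Tendsto (fun s => K * q s) atTop (nhds 0) := by
      have h := hq_tendsto.const_mul K
      simpa using h
    apply tendsto_of_tendsto_of_tendsto_of_le_of_le tendsto_const_nhds hKq
    · exact fun s => sq_nonneg _
    · intro s
      show (u s)^2 ≤ K * q s
      have e : K * q s = (u s)^2 + K*(ε/2*(v s)^2) := by
        simp only [hqdef]; field_simp
      have h2 : 0 ≤ ε/2*(v s)^2 := by positivity
      rw [e]
      linarith [mul_nonneg hK.le h2]
  have hv2 : Tendsto (fun s => (v s)^2) atTop (nhds 0) := by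
    have hEq : Tendsto (fun s => (2/ε) * q s) atTop (nhds 0) := by
      have h := hq_tendsto.const_mul (2/ε)
      simpa using h
    apply tendsto_of_tendsto_of_tendsto_of_le_of_le tendsto_const_nhds hEq
    · exact fun s => sq_nonneg _
    · intro s
      show (v s)^2 ≤ (2/ε) * q s
      have e : (2/ε) * q s = 2*(u s)^2/(ε*K) + (v s)^2 := by
        simp only [hqdef]; field_simp
      have h2 : 0 ≤ 2*(u s)^2/(ε*K) := by positivity
      rw [e]
      linarith
  have habs0 : ∀ (f : ℝ → ℝ), Tendsto (fun s => (f s)^2) atTop (nhds 0) →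
      Tendsto f atTop (nhds 0) := by
    intro f hf
    have hsq : Tendsto (fun s => Real.sqrt ((f s)^2)) atTop (nhds 0) := by
      have hc : Tendsto Real.sqrt (nhds 0) (nhds 0) := by
        have := Real.continuous_sqrt.tendsto 0
        simpa using this
      exact hc.comp hf
    have habs : Tendsto (fun s => |f s|) atTop (nhds 0) := by
      refine hsq.congr fun s => ?_
      rw [Real.sqrt_sq_eq_abs]
    have hneg : Tendsto (fun s => -|f s|) atTop (nhds 0) := by
      simpa using habs.neg
    apply tendsto_of_tendsto_of_tendsto_of_le_of_le hneg habs
    · exact fun s => neg_abs_le _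
    · exact fun s => le_abs_self _
  have hu0 : Tendsto u atTop (nhds 0) := habs0 u hu2
  have hv0 : Tendsto v atTop (nhds 0) := habs0 v hv2
  constructor
  · have h := hu0.add_const xb
    rw [zero_add] at h
    refine h.congr fun s => ?_
    show u s + xb = x s
    rw [hudef]
    ring
  · have h := hv0.add_const ωb
    rw [zero_add] at h
    refine h.congr fun s => ?_
    show v s + ωb = ω s
    rw [hvdef]
    ring
end
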